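/- arXiv:0902.1518 — 3 statements merged into one kernel-verified Lean document; each statement's English description precedes it below -/
import Mathlib

section
/- Suppose n = r. Then the ideal generated by the images of c_0,…,c_{2n-1} and d_0,…,d_{n-1} in the localization of R at the maximal ideal m = (a_0,…,a_{n-1},b_0,…,b_{n-1}) is the whole maximal ideal m·R_m; in particular the Jacobian matrix of (c_0,…,c_{2n-1},d_0,…,d_{n-1}) evaluated at the origin has rank 2n. (This expresses that the Thom–Boardman symbol TB(I(μ_{n,n})) = (n) = I(n,n).) -/
open MvPolynomial Matrix

noncomputable section

namespace TB

/-- The polynomial ring `ℂ[a_0,…,a_{n-1},b_0,…,b_{r-1}]`: variable `Sum.inl i` is `a_i`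
and `Sum.inr j` is `b_j`. -/
abbrev R (n r : ℕ) : Type := MvPolynomial (Fin n ⊕ Fin r) ℂ

/-- The power series `1 + (cf 1)·t + ⋯ + (cf m)·t^m`. -/
def ser {A : Type*} [CommRing A] (m : ℕ) (cf : ℕ → A) : PowerSeries A :=
  PowerSeries.mk fun k => if k = 0 then 1 else if k ≤ m then cf k else 0

/-- `1 + a_{n-1} t + ⋯ + a_0 t^n`. -/
def Aser (n r : ℕ) : PowerSeries (R n r) :=
  ser n fun k => if h : 1 ≤ k ∧ k ≤ n then X (Sum.inl ⟨n - k, by omega⟩) else 0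

/-- `1 + b_{r-1} t + ⋯ + b_0 t^r`. -/
def Bser (n r : ℕ) : PowerSeries (R n r) :=
  ser r fun k => if h : 1 ≤ k ∧ k ≤ r then X (Sum.inr ⟨r - k, by omega⟩) else 0

/-- `1 + d_{n-1} t + ⋯ + d_0 t^n`. -/
def Dser (n r : ℕ) (d : Fin n → R n r) : PowerSeries (R n r) :=
  ser n fun k => if h : 1 ≤ k ∧ k ≤ n then d ⟨n - k, by omega⟩ else 0

/-- `1 + d_{n-1} t + ⋯ + d_1 t^{n-1}`. -/
def Dhatser (n r : ℕ) (d : Fin n → R n r) : PowerSeries (R n r) :=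
  ser (n - 1) fun k => if h : 1 ≤ k ∧ k ≤ n - 1 then d ⟨n - k, by omega⟩ else 0

/-- `f(x) = x^n + a_{n-1}x^{n-1} + ⋯ + a_0`. -/
def fpoly (n r : ℕ) : Polynomial (R n r) :=
  Polynomial.X ^ n + ∑ i : Fin n, Polynomial.C (X (Sum.inl i)) * Polynomial.X ^ (i : ℕ)

/-- `g(x) = x^r + b_{r-1}x^{r-1} + ⋯ + b_0`. -/
def gpoly (n r : ℕ) : Polynomial (R n r) :=
  Polynomial.X ^ r + ∑ j : Fin r, Polynomial.C (X (Sum.inr j)) * Polynomial.X ^ (j : ℕ)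

/-- The coefficient `c_k` of `f·g`, for `0 ≤ k ≤ n+r-1`. -/
def cc (n r : ℕ) (k : Fin (n + r)) : R n r := (fpoly n r * gpoly n r).coeff (k : ℕ)

/-- `d_0, …, d_{n-1}` are the unique polynomials with
`(1 + b_{r-1}t + ⋯ + b_0 t^r)(1 + d_{n-1}t + ⋯ + d_0 t^n) ≡ 1 + a_{n-1}t + ⋯ + a_0 t^n (mod t^{n+1})`. -/
def dSpec (n r : ℕ) (d : Fin n → R n r) : Prop :=
  ∀ k ≤ n, PowerSeries.coeff k (Bser n r * Dser n r d)
    = PowerSeries.coeff k (Aser n r)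

/-- `ψ_i = d_i` for `0 ≤ i ≤ r-1`, and
`ψ_{s·r+i} = ∂^s d_{r-1} / (∂b_0^{s-1} ∂b_{r-1-i})` for `s ≥ 1`, `0 ≤ i ≤ r-1`. -/
def psi (n r : ℕ) (hr : 0 < r) (hrn : r ≤ n) (d : Fin n → R n r) (m : ℕ) : R n r :=
  if h : m < r then d ⟨m, by omega⟩
  else
    (fun q => pderiv (Sum.inr (⟨0, hr⟩ : Fin r)) q)^[m / r - 1]
      (pderiv (Sum.inr (⟨r - 1 - m % r, by omega⟩ : Fin r)) (d ⟨r - 1, by omega⟩))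

/-- The `m×m` lower shift matrix over `R n r`. -/
def Lmat (n r m : ℕ) : Matrix (Fin m) (Fin m) (R n r) :=
  Matrix.of fun i j => if (i : ℕ) = (j : ℕ) + 1 then 1 else 0

/-- `B = I_n + b_{r-1}L_n + ⋯ + b_0 L_n^r`. -/
def Bmat (n r : ℕ) (hr : 0 < r) : Matrix (Fin n) (Fin n) (R n r) :=
  1 + ∑ k ∈ Finset.range r, (X (Sum.inr (⟨r - 1 - k, by omega⟩ : Fin r)) : R n r) • Lmat n r n ^ (k + 1)

/-- `D̂ = I_n + d_{n-1}L_n + ⋯ + d_1 L_n^{n-1}`. -/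
def Dhat (n r : ℕ) (hn : 0 < n) (d : Fin n → R n r) : Matrix (Fin n) (Fin n) (R n r) :=
  1 + ∑ k ∈ Finset.range (n - 1), d ⟨n - 1 - k, by omega⟩ • Lmat n r n ^ (k + 1)

/-- `D`: the first `r` columns of `D̂`. -/
def Dmat (n r : ℕ) (hn : 0 < n) (hrn : r ≤ n) (d : Fin n → R n r) :
    Matrix (Fin n) (Fin r) (R n r) :=
  (Dhat n r hn d).submatrix id (Fin.castLE hrn)

/-- `Â = I_n + a_{n-1}L_n + ⋯ + a_1 L_n^{n-1}`. -/
def Ahat (n r : ℕ) (hn : 0 < n) : Matrix (Fin n) (Fin n) (R n r) :=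
  1 + ∑ k ∈ Finset.range (n - 1),
    (X (Sum.inl (⟨n - 1 - k, by omega⟩ : Fin n)) : R n r) • Lmat n r n ^ (k + 1)

/-- `A`: the first `r` columns of `Â`. -/
def Amat (n r : ℕ) (hn : 0 < n) (hrn : r ≤ n) : Matrix (Fin n) (Fin r) (R n r) :=
  (Ahat n r hn).submatrix id (Fin.castLE hrn)

/-- The Jacobian matrix of a family `p` of elements of `R n r`: the row of index `i` is
`(∂p_i/∂a_{n-1}, …, ∂p_i/∂a_0, ∂p_i/∂b_{r-1}, …, ∂p_i/∂b_0)`. -/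
def jac {n r : ℕ} {ι : Type*} (p : ι → R n r) : Matrix ι (Fin (n + r)) (R n r) :=
  Matrix.of fun i j =>
    if h : (j : ℕ) < n then pderiv (Sum.inl (⟨n - 1 - (j : ℕ), by omega⟩ : Fin n)) (p i)
    else
      pderiv (Sum.inr (⟨r - 1 - ((j : ℕ) - n), by have := j.isLt; omega⟩ : Fin r)) (p i)

/-- The set of all `k×k` minors of a matrix. -/
def minorsSet {n r : ℕ} {ι : Type*} (k : ℕ) (M : Matrix ι (Fin (n + r)) (R n r)) :
    Set (R n r) :=
  { x | ∃ (ri : Fin k → ι) (ci : Fin k → Fin (n + r)), x = (M.submatrix ri ci).det }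

/-- Evaluation at the origin `a_i = b_j = 0`. -/
def ev0 (n r : ℕ) : R n r →+* ℂ := eval fun _ => 0

/-- The maximal ideal `(a_0,…,a_{n-1},b_0,…,b_{r-1})`. -/
def mIdeal (n r : ℕ) : Ideal (R n r) :=
  Ideal.span (Set.range (X : (Fin n ⊕ Fin r) → R n r))

/-- `1 + g_1 t + ⋯ + g_{r_1} t^{r_1}` over `S = ℂ[g_1,…,g_{r_1},b_0,…,b_{r-1}] = R r1 r`,
where `g_k` is the variable `Sum.inl ⟨k-1⟩`. -/
def Gser (r1 r : ℕ) : PowerSeries (R r1 r) :=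
  ser r1 fun k => if h : 1 ≤ k ∧ k ≤ r1 then X (Sum.inl ⟨k - 1, by omega⟩) else 0

/-- `1 + w_{r-1} t + ⋯ + w_0 t^r`. -/
def Wser (r1 r : ℕ) (w : Fin r → R r1 r) : PowerSeries (R r1 r) :=
  ser r fun k => if h : 1 ≤ k ∧ k ≤ r then w ⟨r - k, by omega⟩ else 0

/-- `1 + w_{r-1} t + ⋯ + w_1 t^{r-1}`. -/
def Whatser (r1 r : ℕ) (w : Fin r → R r1 r) : PowerSeries (R r1 r) :=
  ser (r - 1) fun k => if h : 1 ≤ k ∧ k ≤ r - 1 then w ⟨r - k, by omega⟩ else 0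

/-- `w_0,…,w_{r-1}` are the unique polynomials with
`(1 + g_1 t + ⋯ + g_{r_1}t^{r_1})(1 + w_{r-1}t + ⋯ + w_0 t^r) ≡ 1 + b_{r-1}t + ⋯ + b_0 t^r
(mod t^{r+1})`. -/
def wSpec (r1 r : ℕ) (w : Fin r → R r1 r) : Prop :=
  ∀ k ≤ r, PowerSeries.coeff k (Gser r1 r * Wser r1 r w)
    = PowerSeries.coeff k (Bser r1 r)

/-- `φ'_i = w_i` for `0 ≤ i ≤ r_1-1`, and
`φ'_{s·r_1+i} = ∂^s w_{r_1-1} / (∂g_{r_1}^{s-1} ∂g_{1+i})` for `s ≥ 1`, `0 ≤ i ≤ r_1-1`. -/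
def phi' (r1 r : ℕ) (h1 : 0 < r1) (h2 : r1 < r) (w : Fin r → R r1 r) (m : ℕ) : R r1 r :=
  if h : m < r1 then w ⟨m, by omega⟩
  else
    (fun q => pderiv (Sum.inl (⟨r1 - 1, by omega⟩ : Fin r1)) q)^[m / r1 - 1]
      (pderiv (Sum.inl (⟨m % r1, Nat.mod_lt m h1⟩ : Fin r1)) (w ⟨r1 - 1, by omega⟩))

/-- The substitution `g_k ↦ γ_{n-k}`, `b_j ↦ b_j`, from `S = R r1 r` to `R n r`. -/
def subst (n r r1 : ℕ) (γ : ℕ → R n r) : R r1 r →ₐ[ℂ] R n r :=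
  aeval (Sum.elim (fun i : Fin r1 => γ (n - ((i : ℕ) + 1))) fun j : Fin r => X (Sum.inr j))


/-- From `n = q_1·r + r_1` with `q_1 ≥ 1` we get `r ≤ n`. -/
theorem rle (q1 r r1 n : ℕ) (hq1 : 1 ≤ q1) (hn : n = q1 * r + r1) : r ≤ n := by
  have := Nat.le_mul_of_pos_left r hq1
  omega


section Aux

/-- the lower (non-monic) part of `fpoly`/`gpoly`, abstractly: a polynomial with
coefficients `X (e i)` in degree `i < m`. -/
def lowP (n r m : ℕ) (e : Fin m → Fin n ⊕ Fin r) : Polynomial (R n r) :=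
  ∑ i : Fin m, Polynomial.C (X (e i)) * Polynomial.X ^ (i : ℕ)

lemma lowP_coeff (n r m : ℕ) (e : Fin m → Fin n ⊕ Fin r) (k : ℕ) :
    (lowP n r m e).coeff k = if h : k < m then X (e ⟨k, h⟩) else 0 := by
  rw [lowP, Polynomial.finset_sum_coeff]
  simp only [Polynomial.coeff_C_mul, Polynomial.coeff_X_pow, mul_ite, mul_one, mul_zero]
  split
  · next h =>
    rw [Finset.sum_eq_single (⟨k, h⟩ : Fin m)]
    · simp
    · intro b _ hb
      rw [if_neg]
      intro hc
      exact hb (by ext; simp [← hc])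
    · simp
  · next h =>
    apply Finset.sum_eq_zero
    intro b _
    rw [if_neg]
    intro hc
    exact h (hc ▸ b.isLt)

lemma X_mem_mIdeal {n r : ℕ} (v : Fin n ⊕ Fin r) : (X v : R n r) ∈ mIdeal n r :=
  Ideal.subset_span ⟨v, rfl⟩

lemma lowP_coeff_mem (n r m : ℕ) (e : Fin m → Fin n ⊕ Fin r) (k : ℕ) :
    (lowP n r m e).coeff k ∈ mIdeal n r := by
  rw [lowP_coeff]
  split
  · exact X_mem_mIdeal _
  · exact Ideal.zero_mem _

lemma mul_coeff_mem {n r : ℕ} {p q : Polynomial (R n r)} (hp : ∀ k, p.coeff k ∈ mIdeal n r)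
    (hq : ∀ k, q.coeff k ∈ mIdeal n r) (k : ℕ) :
    (p * q).coeff k ∈ mIdeal n r * mIdeal n r := by
  rw [Polynomial.coeff_mul]
  exact Ideal.sum_mem _ fun c _ => Ideal.mul_mem_mul (hp c.1) (hq c.2)

lemma fpoly_eq (n r : ℕ) : fpoly n r = Polynomial.X ^ n + lowP n r n Sum.inl := rfl

lemma gpoly_eq (n r : ℕ) : gpoly n r = Polynomial.X ^ r + lowP n r r Sum.inr := rfl

lemma fg_expand (n r : ℕ) :
    fpoly n r * gpoly n r = Polynomial.X ^ (n + r)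
      + lowP n r r Sum.inr * Polynomial.X ^ n
      + lowP n r n Sum.inl * Polynomial.X ^ r
      + lowP n r n Sum.inl * lowP n r r Sum.inr := by
  rw [fpoly_eq, gpoly_eq, pow_add]; ring

end Aux
section Aux2

lemma cc_mem (n r : ℕ) (k : Fin (n + r)) : cc n r k ∈ mIdeal n r := by
  rw [cc, fg_expand]
  simp only [Polynomial.coeff_add, Polynomial.coeff_X_pow, Polynomial.coeff_mul_X_pow']
  refine Ideal.add_mem _ (Ideal.add_mem _ (Ideal.add_mem _ ?_ ?_) ?_) ?_
  · rw [if_neg (by omega : ¬ (k : ℕ) = n + r)]; exact Ideal.zero_mem _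
  · split
    · exact lowP_coeff_mem _ _ _ _ _
    · exact Ideal.zero_mem _
  · split
    · exact lowP_coeff_mem _ _ _ _ _
    · exact Ideal.zero_mem _
  · exact Ideal.mul_le_left (mul_coeff_mem (lowP_coeff_mem _ _ _ _) (lowP_coeff_mem _ _ _ _) _)

lemma cc_high (n : ℕ) (hn : 1 ≤ n) (t : Fin n) :
    cc n n ⟨n + (t : ℕ), by omega⟩ - (X (Sum.inl t) + X (Sum.inr t))
      ∈ mIdeal n n * mIdeal n n := by
  have ht := t.isLt
  have h1 : cc n n ⟨n + (t : ℕ), by omega⟩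
      = X (Sum.inl t) + X (Sum.inr t)
        + (lowP n n n Sum.inl * lowP n n n Sum.inr).coeff (n + (t : ℕ)) := by
    rw [cc, fg_expand]
    simp only [Polynomial.coeff_add, Polynomial.coeff_X_pow, Polynomial.coeff_mul_X_pow']
    rw [if_neg (by omega : ¬ n + (t : ℕ) = n + n),
      if_pos (by omega : n ≤ n + (t : ℕ)), if_pos (by omega : n ≤ n + (t : ℕ))]
    have : n + (t : ℕ) - n = (t : ℕ) := by omega
    rw [this, lowP_coeff, lowP_coeff, dif_pos t.isLt, dif_pos t.isLt]
    simp only [Fin.eta]; ring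
  rw [h1]
  simpa using mul_coeff_mem (lowP_coeff_mem _ _ _ _) (lowP_coeff_mem _ _ _ _) (n + (t : ℕ))

end Aux2
section Aux3

lemma coeff_ser {A : Type*} [CommRing A] (m : ℕ) (cf : ℕ → A) (k : ℕ) :
    PowerSeries.coeff k (ser m cf) = if k = 0 then 1 else if k ≤ m then cf k else 0 :=
  PowerSeries.coeff_mk _ _

lemma d_key (n : ℕ) (d : Fin n → R n n) (hd : dSpec n n d) :
    ∀ k, ∀ (_ : 1 ≤ k) (_ : k ≤ n),
      d ⟨n - k, by omega⟩ ∈ mIdeal n n ∧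
      d ⟨n - k, by omega⟩ - (X (Sum.inl ⟨n - k, by omega⟩) - X (Sum.inr ⟨n - k, by omega⟩))
        ∈ mIdeal n n * mIdeal n n := by
  intro k
  induction k using Nat.strong_induction_on with
  | _ k ih =>
    intro hk1 hkn
    have h := hd k hkn
    rw [PowerSeries.coeff_mul, Finset.Nat.sum_antidiagonal_eq_sum_range_succ_mk,
      Finset.sum_range_succ'] at h
    have hk' : k = (k - 1) + 1 := by omega
    rw [hk', Finset.sum_range_succ, ← hk', Nat.sub_self, Nat.sub_zero] at h
    have hB0 : PowerSeries.coeff 0 (Bser n n) = 1 := by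
      rw [Bser, coeff_ser, if_pos rfl]
    have hD0 : PowerSeries.coeff 0 (Dser n n d) = 1 := by
      rw [Dser, coeff_ser, if_pos rfl]
    have hDk : PowerSeries.coeff k (Dser n n d) = d ⟨n - k, by omega⟩ := by
      rw [Dser, coeff_ser, if_neg (by omega : ¬ k = 0), if_pos hkn,
        dif_pos (⟨hk1, hkn⟩ : 1 ≤ k ∧ k ≤ n)]
    have hBk : PowerSeries.coeff k (Bser n n) = X (Sum.inr ⟨n - k, by omega⟩) := by
      rw [Bser, coeff_ser, if_neg (by omega : ¬ k = 0), if_pos hkn,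
        dif_pos (⟨hk1, hkn⟩ : 1 ≤ k ∧ k ≤ n)]
    have hAk : PowerSeries.coeff k (Aser n n) = X (Sum.inl ⟨n - k, by omega⟩) := by
      rw [Aser, coeff_ser, if_neg (by omega : ¬ k = 0), if_pos hkn,
        dif_pos (⟨hk1, hkn⟩ : 1 ≤ k ∧ k ≤ n)]
    rw [hB0, hD0, hDk, hBk, hAk, one_mul, mul_one] at h
    set S := ∑ i ∈ Finset.range (k - 1),
      PowerSeries.coeff (i + 1) (Bser n n)
        * PowerSeries.coeff (k - (i + 1)) (Dser n n d) with hSdef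
    have hS : S ∈ mIdeal n n * mIdeal n n := by
      rw [hSdef]
      refine Ideal.sum_mem _ fun i hi => ?_
      have hi' : i < k - 1 := Finset.mem_range.mp hi
      have hB : PowerSeries.coeff (i + 1) (Bser n n)
          = X (Sum.inr ⟨n - (i + 1), by omega⟩) := by
        rw [Bser, coeff_ser, if_neg (by omega : ¬ i + 1 = 0), if_pos (by omega : i + 1 ≤ n),
          dif_pos (⟨by omega, by omega⟩ : 1 ≤ i + 1 ∧ i + 1 ≤ n)]
      have hD : PowerSeries.coeff (k - (i + 1)) (Dser n n d)
          = d ⟨n - (k - (i + 1)), by omega⟩ := by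
        rw [Dser, coeff_ser, if_neg (by omega : ¬ k - (i + 1) = 0),
          if_pos (by omega : k - (i + 1) ≤ n),
          dif_pos (⟨by omega, by omega⟩ : 1 ≤ k - (i + 1) ∧ k - (i + 1) ≤ n)]
      rw [hB, hD]
      exact Ideal.mul_mem_mul (X_mem_mIdeal _)
        ((ih (k - (i + 1)) (by omega) (by omega) (by omega)).1)
    constructor
    · have he : d ⟨n - k, by omega⟩
          = X (Sum.inl ⟨n - k, by omega⟩) - X (Sum.inr ⟨n - k, by omega⟩) - S := by
        linear_combination h
      rw [he]
      exact sub_mem (sub_mem (X_mem_mIdeal _) (X_mem_mIdeal _)) (Ideal.mul_le_left hS)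
    · have he : d ⟨n - k, by omega⟩
          - (X (Sum.inl ⟨n - k, by omega⟩) - X (Sum.inr ⟨n - k, by omega⟩)) = -S := by
        linear_combination h
      rw [he]
      exact neg_mem hS

lemma d_mem (n : ℕ) (d : Fin n → R n n) (hd : dSpec n n d) (j : Fin n) : d j ∈ mIdeal n n := by
  have hj := j.isLt
  have h := (d_key n d hd (n - (j : ℕ)) (by omega) (by omega)).1
  have : (⟨n - (n - (j : ℕ)), by omega⟩ : Fin n) = j := by ext; simp; omega
  rwa [this] at h

lemma d_lin (n : ℕ) (d : Fin n → R n n) (hd : dSpec n n d) (j : Fin n) :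
    d j - (X (Sum.inl j) - X (Sum.inr j)) ∈ mIdeal n n * mIdeal n n := by
  have hj := j.isLt
  have h := (d_key n d hd (n - (j : ℕ)) (by omega) (by omega)).2
  have : (⟨n - (n - (j : ℕ)), by omega⟩ : Fin n) = j := by ext; simp; omega
  rwa [this] at h

end Aux3
section Aux4

lemma ev0_mem {n r : ℕ} {p : R n r} (hp : p ∈ mIdeal n r) : ev0 n r p = 0 := by
  have hle : mIdeal n r ≤ RingHom.ker (ev0 n r) := by
    rw [mIdeal, Ideal.span_le]
    rintro _ ⟨v, rfl⟩
    simp [RingHom.mem_ker, ev0]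
  exact hle hp

lemma ev0_pderiv_sq {n r : ℕ} {p : R n r} (v : Fin n ⊕ Fin r)
    (hp : p ∈ mIdeal n r * mIdeal n r) : ev0 n r (pderiv v p) = 0 := by
  refine Submodule.mul_induction_on hp (fun x hx y hy => ?_) (fun x y hx hy => ?_)
  · rw [pderiv_mul, map_add, _root_.map_mul, _root_.map_mul, ev0_mem hx, ev0_mem hy]
    ring
  · rw [map_add, map_add, hx, hy, add_zero]

lemma ev0_pderiv_congr {n r : ℕ} {p q : R n r} (v : Fin n ⊕ Fin r)
    (h : p - q ∈ mIdeal n r * mIdeal n r) :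
    ev0 n r (pderiv v p) = ev0 n r (pderiv v q) := by
  have h2 := ev0_pderiv_sq v h
  rw [map_sub, map_sub] at h2
  exact sub_eq_zero.mp h2

lemma ev0_pderiv_X {n r : ℕ} (v w : Fin n ⊕ Fin r) :
    ev0 n r (pderiv v (X w)) = if w = v then 1 else 0 := by
  rw [pderiv_X, Pi.single_apply]
  split <;> simp [ev0]

end Aux4
section Aux5

lemma entry_high (n : ℕ) (hn : 1 ≤ n) (d : Fin n → R n n) (t : Fin n) (j : Fin (n + n)) :
    ((jac (Sum.elim (cc n n) d)).map (ev0 n n)) (Sum.inl ⟨n + (t : ℕ), by omega⟩) j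
      = (if (j : ℕ) = n - 1 - (t : ℕ) then 1 else 0)
        + (if (j : ℕ) = n + (n - 1 - (t : ℕ)) then 1 else 0) := by
  have ht := t.isLt
  have hj := j.isLt
  rw [Matrix.map_apply]
  simp only [jac, Matrix.of_apply, Sum.elim_inl]
  rcases lt_or_ge (j : ℕ) n with hjn | hjn
  · rw [dif_pos hjn, ev0_pderiv_congr _ (cc_high n hn t), map_add, map_add,
      ev0_pderiv_X, ev0_pderiv_X]
    simp only [Sum.inl.injEq, Fin.ext_iff, reduceCtorEq, if_false]
    split_ifs <;> first | ring1 | (exfalso; omega)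
  · rw [dif_neg (by omega), ev0_pderiv_congr _ (cc_high n hn t), map_add, map_add,
      ev0_pderiv_X, ev0_pderiv_X]
    simp only [Sum.inr.injEq, Fin.ext_iff, reduceCtorEq, if_false]
    split_ifs <;> first | ring1 | (exfalso; omega)

lemma entry_d (n : ℕ) (hn : 1 ≤ n) (d : Fin n → R n n) (hd : dSpec n n d) (t : Fin n)
    (j : Fin (n + n)) :
    ((jac (Sum.elim (cc n n) d)).map (ev0 n n)) (Sum.inr t) j
      = (if (j : ℕ) = n - 1 - (t : ℕ) then 1 else 0)
        - (if (j : ℕ) = n + (n - 1 - (t : ℕ)) then 1 else 0) := by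
  have ht := t.isLt
  have hj := j.isLt
  rw [Matrix.map_apply]
  simp only [jac, Matrix.of_apply, Sum.elim_inr]
  rcases lt_or_ge (j : ℕ) n with hjn | hjn
  · rw [dif_pos hjn, ev0_pderiv_congr _ (d_lin n d hd t), map_sub, map_sub,
      ev0_pderiv_X, ev0_pderiv_X]
    simp only [Sum.inl.injEq, Fin.ext_iff, reduceCtorEq, if_false]
    split_ifs <;> first | ring1 | (exfalso; omega)
  · rw [dif_neg (by omega), ev0_pderiv_congr _ (d_lin n d hd t), map_sub, map_sub,
      ev0_pderiv_X, ev0_pderiv_X]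
    simp only [Sum.inr.injEq, Fin.ext_iff, reduceCtorEq, if_false]
    split_ifs <;> first | ring1 | (exfalso; omega)

lemma sum_pick {N : ℕ} (v : Fin N → ℂ) (c : ℕ) (hc : c < N) :
    ∑ j : Fin N, (if (j : ℕ) = c then (1 : ℂ) else 0) * v j = v ⟨c, hc⟩ := by
  rw [Finset.sum_eq_single (⟨c, hc⟩ : Fin N)]
  · simp
  · intro b _ hb
    rw [if_neg, zero_mul]
    intro hbc
    exact hb (by ext; exact hbc)
  · simp

end Aux5
/-- Corollary 2.2: in the case `n = r`, the ideal generated by the images of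
the `c`'s and `d`'s in the localization of `R` at the maximal ideal `m = (a_i, b_j)` is all of
`m·R_m`, and the Jacobian of `(c_0,…,c_{2n-1},d_0,…,d_{n-1})` at the origin has rank `2n`. -/
theorem stmt1 (n : ℕ) (hn : 1 ≤ n)
    (d : Fin n → R n n) (hd : dSpec n n d)
    [hm : (mIdeal n n).IsPrime] :
    Ideal.span ((algebraMap (R n n) (Localization.AtPrime (mIdeal n n))) ''
        (Set.range (cc n n) ∪ Set.range d))
      = Ideal.map (algebraMap (R n n) (Localization.AtPrime (mIdeal n n))) (mIdeal n n)
    ∧ ((jac (Sum.elim (cc n n) d)).map (ev0 n n)).rank = 2 * n := by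
  constructor
  · -- the ideal statement
    set φ := algebraMap (R n n) (Localization.AtPrime (mIdeal n n)) with hφ
    apply le_antisymm
    · rw [Ideal.span_le]
      rintro _ ⟨x, hx, rfl⟩
      rcases hx with ⟨t, rfl⟩ | ⟨t, rfl⟩
      · exact Ideal.mem_map_of_mem _ (cc_mem n n t)
      · exact Ideal.mem_map_of_mem _ (d_mem n d hd t)
    · have hNN : Ideal.map φ (mIdeal n n)
          ≤ Ideal.span (φ '' (Set.range (cc n n) ∪ Set.range d))
            ⊔ Ideal.map φ (mIdeal n n) • Ideal.map φ (mIdeal n n) := by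
        rw [Ideal.smul_eq_mul, ← Ideal.map_mul]
        have hms : Ideal.map φ (mIdeal n n) = Ideal.span (φ '' Set.range X) :=
          Ideal.map_span φ _
        rw [hms, Ideal.span_le]
        rintro _ ⟨_, ⟨v, rfl⟩, rfl⟩
        rw [SetLike.mem_coe]
        rcases v with t | t
        · have key : (2 : R n n) * X (Sum.inl t)
              = cc n n ⟨n + (t : ℕ), by omega⟩ + d t
                - (cc n n ⟨n + (t : ℕ), by omega⟩ - (X (Sum.inl t) + X (Sum.inr t)))
                - (d t - (X (Sum.inl t) - X (Sum.inr t))) := by ring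
          have h2 : φ ((2 : R n n) * X (Sum.inl t))
              ∈ Ideal.span (φ '' (Set.range (cc n n) ∪ Set.range d))
                ⊔ Ideal.map φ (mIdeal n n * mIdeal n n) := by
            rw [key, map_sub, map_sub, _root_.map_add]
            refine sub_mem (sub_mem (add_mem ?_ ?_) ?_) ?_
            · exact Ideal.mem_sup_left (Ideal.subset_span
                (Set.mem_image_of_mem φ (Set.mem_union_left _ ⟨_, rfl⟩)))
            · exact Ideal.mem_sup_left (Ideal.subset_span
                (Set.mem_image_of_mem φ (Set.mem_union_right _ ⟨t, rfl⟩)))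
            · exact Ideal.mem_sup_right (Ideal.mem_map_of_mem _ (cc_high n hn t))
            · exact Ideal.mem_sup_right (Ideal.mem_map_of_mem _ (d_lin n d hd t))
          have hhalf : φ (X (Sum.inl t))
              = φ (MvPolynomial.C (2⁻¹ : ℂ)) * φ ((2 : R n n) * X (Sum.inl t)) := by
            rw [← _root_.map_mul]
            congr 1
            rw [← mul_assoc]
            have h2C : (2 : R n n) = MvPolynomial.C (2 : ℂ) :=
              (map_ofNat MvPolynomial.C 2).symm
            rw [h2C, ← _root_.map_mul]
            norm_num
          rw [hhalf]
          exact Ideal.mul_mem_left _ _ h2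
        · have key : (2 : R n n) * X (Sum.inr t)
              = cc n n ⟨n + (t : ℕ), by omega⟩ - d t
                - (cc n n ⟨n + (t : ℕ), by omega⟩ - (X (Sum.inl t) + X (Sum.inr t)))
                + (d t - (X (Sum.inl t) - X (Sum.inr t))) := by ring
          have h2 : φ ((2 : R n n) * X (Sum.inr t))
              ∈ Ideal.span (φ '' (Set.range (cc n n) ∪ Set.range d))
                ⊔ Ideal.map φ (mIdeal n n * mIdeal n n) := by
            rw [key, _root_.map_add, map_sub, map_sub]
            refine add_mem (sub_mem (sub_mem ?_ ?_) ?_) ?_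
            · exact Ideal.mem_sup_left (Ideal.subset_span
                (Set.mem_image_of_mem φ (Set.mem_union_left _ ⟨_, rfl⟩)))
            · exact Ideal.mem_sup_left (Ideal.subset_span
                (Set.mem_image_of_mem φ (Set.mem_union_right _ ⟨t, rfl⟩)))
            · exact Ideal.mem_sup_right (Ideal.mem_map_of_mem _ (cc_high n hn t))
            · exact Ideal.mem_sup_right (Ideal.mem_map_of_mem _ (d_lin n d hd t))
          have hhalf : φ (X (Sum.inr t))
              = φ (MvPolynomial.C (2⁻¹ : ℂ)) * φ ((2 : R n n) * X (Sum.inr t)) := by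
            rw [← _root_.map_mul]
            congr 1
            rw [← mul_assoc]
            have h2C : (2 : R n n) = MvPolynomial.C (2 : ℂ) :=
              (map_ofNat MvPolynomial.C 2).symm
            rw [h2C, ← _root_.map_mul]
            norm_num
          rw [hhalf]
          exact Ideal.mul_mem_left _ _ h2
      have hNoeth : IsNoetherianRing (Localization.AtPrime (mIdeal n n)) :=
        IsLocalization.isNoetherianRing (mIdeal n n).primeCompl _ inferInstance
      have hfg : (Ideal.map φ (mIdeal n n)).FG := IsNoetherian.noetherian _
      have hjac : Ideal.map φ (mIdeal n n) ≤ Ideal.jacobson ⊥ := by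
        rw [IsLocalRing.jacobson_eq_maximalIdeal ⊥ bot_ne_top, hφ,
          Localization.AtPrime.map_eq_maximalIdeal]
      exact Submodule.le_of_le_smul_of_le_jacobson_bot hfg hjac hNN
  · -- the rank statement
    have hinj : Function.Injective
        (((jac (Sum.elim (cc n n) d)).map (ev0 n n)).mulVecLin) := by
      rw [← LinearMap.ker_eq_bot, eq_bot_iff]
      intro v hv
      rw [LinearMap.mem_ker, Matrix.mulVecLin_apply] at hv
      have key : ∀ t : Fin n, v ⟨n - 1 - (t : ℕ), by omega⟩ = 0
          ∧ v ⟨n + (n - 1 - (t : ℕ)), by omega⟩ = 0 := by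
        intro t
        have h1 := congrFun hv (Sum.inl ⟨n + (t : ℕ), by omega⟩)
        have h2 := congrFun hv (Sum.inr t)
        simp only [Matrix.mulVec, dotProduct, Pi.zero_apply] at h1 h2
        rw [Finset.sum_congr rfl (fun j _ => by rw [entry_high n hn d t j])] at h1
        rw [Finset.sum_congr rfl (fun j _ => by rw [entry_d n hn d hd t j])] at h2
        simp only [add_mul, sub_mul] at h1 h2
        rw [Finset.sum_add_distrib, sum_pick v (n - 1 - (t : ℕ)) (by omega),
          sum_pick v (n + (n - 1 - (t : ℕ))) (by omega)] at h1
        rw [Finset.sum_sub_distrib, sum_pick v (n - 1 - (t : ℕ)) (by omega),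
          sum_pick v (n + (n - 1 - (t : ℕ))) (by omega)] at h2
        constructor
        · linear_combination (h1 + h2) / 2
        · linear_combination (h1 - h2) / 2
      -- finish: v = 0
      have hz : ∀ j : Fin (n + n), v j = 0 := by
        intro j
        have hj := j.isLt
        rcases lt_or_ge (j : ℕ) n with h | h
        · have hk := (key ⟨n - 1 - (j : ℕ), by omega⟩).1
          rwa [show (⟨n - 1 - (n - 1 - (j : ℕ)), by omega⟩ : Fin (n + n)) = j by
            ext; simp; omega] at hk
        · have hk := (key ⟨n - 1 - ((j : ℕ) - n), by omega⟩).2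
          rwa [show (⟨n + (n - 1 - (n - 1 - ((j : ℕ) - n))), by omega⟩ : Fin (n + n)) = j by
            ext; simp; omega] at hk
      exact (Submodule.mem_bot ℂ).mpr (funext hz)
    rw [Matrix.rank, LinearMap.finrank_range_of_inj hinj]
    simp [Module.finrank_pi]
    omega

end TB
end
end

section
/- Let P be the n×n matrix over R with (i,j)-entry ∂d_{n-1-i}/∂a_{n-1-j} and Q the n×r matrix with (i,j)-entry ∂d_{n-1-i}/∂b_{r-1-j} (indices 0-based). Then B·P = I_n and B·Q + D = 0. Moreover A = B·D, where A is the n×r matrix formed by the first r columns of I_n + a_{n-1}L_n + ⋯ + a_1 L_n^{n-1}. -/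
open MvPolynomial Matrix

noncomputable section

namespace TB

/-! ### Auxiliary machinery for `stmt2` -/

/-- Coefficients of `Bser`. -/
def bco (n r : ℕ) (m : ℕ) : R n r :=
  if h0 : m = 0 then 1 else if h : m ≤ r then X (Sum.inr ⟨r - m, by omega⟩) else 0

/-- Coefficients of `Aser`. -/
def aco (n r : ℕ) (m : ℕ) : R n r :=
  if h0 : m = 0 then 1 else if h : m ≤ n then X (Sum.inl ⟨n - m, by omega⟩) else 0

/-- Coefficients of `Dser`. -/
def dco (n r : ℕ) (d : Fin n → R n r) (m : ℕ) : R n r :=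
  if h0 : m = 0 then 1 else if h : m ≤ n then d ⟨n - m, by omega⟩ else 0

lemma coeff_Bser (n r k : ℕ) : PowerSeries.coeff k (Bser n r) = bco n r k := by
  simp only [Bser, ser, PowerSeries.coeff_mk, bco]
  split_ifs with h1 h2 h3 h4 <;> first | rfl | omega

lemma coeff_Aser (n r k : ℕ) : PowerSeries.coeff k (Aser n r) = aco n r k := by
  simp only [Aser, ser, PowerSeries.coeff_mk, aco]
  split_ifs with h1 h2 h3 h4 <;> first | rfl | omega

lemma coeff_Dser (n r k : ℕ) (d : Fin n → R n r) :
    PowerSeries.coeff k (Dser n r d) = dco n r d k := by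
  simp only [Dser, ser, PowerSeries.coeff_mk, dco]
  split_ifs with h1 h2 h3 h4 <;> first | rfl | omega

/-- The key convolution identity from `dSpec`. -/
lemma key (n r : ℕ) (d : Fin n → R n r) (hd : dSpec n r d) (k : ℕ) (hk : k ≤ n) :
    ∑ m ∈ Finset.range (k + 1), bco n r m * dco n r d (k - m) = aco n r k := by
  have h := hd k hk
  rw [PowerSeries.coeff_mul, Finset.Nat.sum_antidiagonal_eq_sum_range_succ_mk] at h
  simpa only [coeff_Bser, coeff_Dser, coeff_Aser] using h


lemma sum_shift {A : Type*} [CommRing A] (s : ℕ) (c : ℕ → A) (t u : ℕ) :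
    ∑ k ∈ Finset.range s, c k * (if t = u + (k + 1) then (1 : A) else 0)
      = if u + 1 ≤ t ∧ t ≤ u + s then c (t - u - 1) else 0 := by
  by_cases h : u + 1 ≤ t ∧ t ≤ u + s
  · rw [if_pos h, Finset.sum_eq_single (t - u - 1)]
    · rw [if_pos (by omega), mul_one]
    · intro k hk hk'
      rw [Finset.mem_range] at hk
      rw [if_neg (by omega), mul_zero]
    · intro hk
      exact absurd (Finset.mem_range.2 (by omega)) hk
  · rw [if_neg h, Finset.sum_eq_zero]
    intro k hk
    rw [Finset.mem_range] at hk
    rw [if_neg (by omega), mul_zero]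

lemma Lpow_entry (n r m p : ℕ) (i j : Fin m) :
    (Lmat n r m ^ p) i j = if (i : ℕ) = (j : ℕ) + p then 1 else 0 := by
  induction p generalizing i with
  | zero =>
    simp only [pow_zero, Matrix.one_apply, Nat.add_zero, Fin.ext_iff]
  | succ p ih =>
    rw [pow_succ', Matrix.mul_apply]
    by_cases h : 0 < (i : ℕ)
    · rw [Finset.sum_eq_single (⟨(i : ℕ) - 1, by omega⟩ : Fin m)]
      · rw [ih]
        simp only [Lmat, Matrix.of_apply, Fin.val_mk]
        rw [if_pos (by omega), one_mul]
        split_ifs <;> first | rfl | omega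
      · intro l _ hl
        simp only [Lmat, Matrix.of_apply]
        rw [if_neg, zero_mul]
        intro hc
        exact hl (by apply Fin.ext; simp; omega)
      · intro hl
        exact absurd (Finset.mem_univ _) hl
    · rw [Finset.sum_eq_zero, if_neg (by omega)]
      intro l _
      simp only [Lmat, Matrix.of_apply]
      rw [if_neg (by omega), zero_mul]

lemma Bmat_entry (n r : ℕ) (hr : 0 < r) (i l : Fin n) :
    Bmat n r hr i l = if (l : ℕ) ≤ (i : ℕ) then bco n r ((i : ℕ) - l) else 0 := by
  simp only [Bmat, Matrix.add_apply, Matrix.one_apply, Matrix.sum_apply,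
    Matrix.smul_apply, smul_eq_mul, Lpow_entry]
  rw [sum_shift]
  by_cases h0 : (i : ℕ) = (l : ℕ)
  · rw [if_pos (Fin.ext h0), if_neg (by omega), if_pos (by omega), add_zero]
    simp [bco, show (i : ℕ) - (l : ℕ) = 0 by omega]
  · rw [if_neg (fun hc => h0 (by rw [hc]))]
    by_cases h1 : (l : ℕ) + 1 ≤ (i : ℕ) ∧ (i : ℕ) ≤ (l : ℕ) + r
    · rw [if_pos h1, if_pos (by omega), zero_add]
      simp only [bco]
      rw [dif_neg (by omega), dif_pos (by omega)]
      exact congrArg (fun v : Fin r => (X (Sum.inr v) : R n r)) (Fin.mk_eq_mk.mpr (by omega))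
    · rw [if_neg h1, zero_add]
      by_cases h2 : (l : ℕ) ≤ (i : ℕ)
      · rw [if_pos h2]
        simp only [bco]
        rw [dif_neg (by omega), dif_neg (by omega)]
      · rw [if_neg h2]

lemma Dhat_entry (n r : ℕ) (hn : 0 < n) (d : Fin n → R n r) (i l : Fin n) :
    Dhat n r hn d i l = if (l : ℕ) ≤ (i : ℕ) then dco n r d ((i : ℕ) - l) else 0 := by
  have hi := i.isLt
  simp only [Dhat, Matrix.add_apply, Matrix.one_apply, Matrix.sum_apply,
    Matrix.smul_apply, smul_eq_mul, Lpow_entry]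
  rw [sum_shift]
  by_cases h0 : (i : ℕ) = (l : ℕ)
  · rw [if_pos (Fin.ext h0), if_neg (by omega), if_pos (by omega), add_zero]
    simp [dco, show (i : ℕ) - (l : ℕ) = 0 by omega]
  · rw [if_neg (fun hc => h0 (by rw [hc]))]
    by_cases h1 : (l : ℕ) + 1 ≤ (i : ℕ) ∧ (i : ℕ) ≤ (l : ℕ) + (n - 1)
    · rw [if_pos h1, if_pos (by omega), zero_add]
      simp only [dco]
      rw [dif_neg (by omega), dif_pos (by omega)]
      exact congrArg d (Fin.mk_eq_mk.mpr (by omega))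
    · rw [if_neg h1, zero_add]
      by_cases h2 : (l : ℕ) ≤ (i : ℕ)
      · omega
      · rw [if_neg h2]

lemma Ahat_entry (n r : ℕ) (hn : 0 < n) (i l : Fin n) :
    Ahat n r hn i l = if (l : ℕ) ≤ (i : ℕ) then aco n r ((i : ℕ) - l) else 0 := by
  have hi := i.isLt
  simp only [Ahat, Matrix.add_apply, Matrix.one_apply, Matrix.sum_apply,
    Matrix.smul_apply, smul_eq_mul, Lpow_entry]
  rw [sum_shift]
  by_cases h0 : (i : ℕ) = (l : ℕ)
  · rw [if_pos (Fin.ext h0), if_neg (by omega), if_pos (by omega), add_zero]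
    simp [aco, show (i : ℕ) - (l : ℕ) = 0 by omega]
  · rw [if_neg (fun hc => h0 (by rw [hc]))]
    by_cases h1 : (l : ℕ) + 1 ≤ (i : ℕ) ∧ (i : ℕ) ≤ (l : ℕ) + (n - 1)
    · rw [if_pos h1, if_pos (by omega), zero_add]
      simp only [aco]
      rw [dif_neg (by omega), dif_pos (by omega)]
      exact congrArg (fun v : Fin n => (X (Sum.inl v) : R n r)) (Fin.mk_eq_mk.mpr (by omega))
    · rw [if_neg h1, zero_add]
      by_cases h2 : (l : ℕ) ≤ (i : ℕ)
      · omega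
      · rw [if_neg h2]

/-- Reindexing a lower-triangular convolution sum over `Fin n` as a range sum. -/
lemma conv (n r : ℕ) (hr : 0 < r) (i : Fin n) (f : ℕ → R n r) :
    ∑ l : Fin n, Bmat n r hr i l * f l
      = ∑ m ∈ Finset.range ((i : ℕ) + 1), bco n r m * f ((i : ℕ) - m) := by
  have hi := i.isLt
  simp only [Bmat_entry]
  rw [Fin.sum_univ_eq_sum_range
    (fun t => (if t ≤ (i : ℕ) then bco n r ((i : ℕ) - t) else 0) * f t) n]
  have hsub : Finset.range ((i : ℕ) + 1) ⊆ Finset.range n := Finset.range_subset_range.mpr (by omega)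
  have hzero : ∀ x ∈ Finset.range n, x ∉ Finset.range ((i : ℕ) + 1) →
      (if x ≤ (i : ℕ) then bco n r ((i : ℕ) - x) else 0) * f x = 0 := by
    intro x hx hnx
    rw [Finset.mem_range] at hnx
    rw [if_neg (by omega), zero_mul]
  rw [← Finset.sum_subset hsub hzero, ← Finset.sum_range_reflect]
  apply Finset.sum_congr rfl
  intro m hm
  rw [Finset.mem_range] at hm
  rw [show (i : ℕ) + 1 - 1 - m = (i : ℕ) - m from by omega, if_pos (by omega),
    show (i : ℕ) - ((i : ℕ) - m) = m from by omega]

lemma pderiv_bco_inl (n r m : ℕ) (x : Fin n) :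
    pderiv (Sum.inl x) (bco n r m) = 0 := by
  simp only [bco]
  split_ifs
  · simp
  · rw [pderiv_X]
    simp [Pi.single_apply]
  · simp

lemma pderiv_bco_inr (n r m : ℕ) (x : Fin r) :
    pderiv (Sum.inr x) (bco n r m) = if m = r - (x : ℕ) then 1 else 0 := by
  have hxlt := x.isLt
  by_cases h0 : m = 0
  · subst h0
    rw [if_neg (by omega)]
    simp [bco]
  · by_cases hm : m ≤ r
    · simp only [bco, dif_neg h0, dif_pos hm, pderiv_X, Pi.single_apply, Sum.inr.injEq,
        Fin.ext_iff, Fin.val_mk]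
      split_ifs <;> first | rfl | omega
    · simp only [bco, dif_neg h0, dif_neg hm, map_zero]
      rw [if_neg (by omega)]

lemma pderiv_aco_inl (n r k : ℕ) (h1 : 1 ≤ k) (h2 : k ≤ n) (x : Fin n) :
    pderiv (Sum.inl x) (aco n r k) = if (x : ℕ) = n - k then 1 else 0 := by
  have hxlt := x.isLt
  simp only [aco, dif_neg (by omega : ¬ k = 0), dif_pos h2, pderiv_X, Pi.single_apply,
    Sum.inl.injEq, Fin.ext_iff, Fin.val_mk]
  split_ifs <;> first | rfl | omega

lemma pderiv_aco_inr (n r k : ℕ) (x : Fin r) :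
    pderiv (Sum.inr x) (aco n r k) = 0 := by
  simp only [aco]
  split_ifs <;> simp [pderiv_X, Pi.single_apply]

lemma dco_zero (n r : ℕ) (d : Fin n → R n r) : dco n r d 0 = 1 := by simp [dco]

lemma sum_pick_s2 {A : Type*} [CommRing A] (s : ℕ) (g : ℕ → A) (t : ℕ) :
    ∑ m ∈ Finset.range s, g m * (if m = t then (1 : A) else 0)
      = if t < s then g t else 0 := by
  by_cases h : t < s
  · rw [if_pos h, Finset.sum_eq_single t]
    · rw [if_pos rfl, mul_one]
    · intro k hk hk'
      rw [if_neg hk', mul_zero]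
    · intro hk
      exact absurd (Finset.mem_range.2 h) hk
  · rw [if_neg h, Finset.sum_eq_zero]
    intro k hk
    rw [Finset.mem_range] at hk
    rw [if_neg (by omega), mul_zero]

/-- Equation (3.3) and `A = BD`: `B·P = I_n`, `B·Q + D = 0`, and `A = B·D`,
where `P_{ij} = ∂d_{n-1-i}/∂a_{n-1-j}` and `Q_{ij} = ∂d_{n-1-i}/∂b_{r-1-j}`. -/
theorem stmt2 (n r : ℕ) (hr : 1 ≤ r) (hrn : r ≤ n)
    (d : Fin n → R n r) (hd : dSpec n r d) :
    Bmat n r hr * (Matrix.of fun i j : Fin n =>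
        pderiv (Sum.inl (⟨n - 1 - (j : ℕ), by omega⟩ : Fin n)) (d ⟨n - 1 - (i : ℕ), by omega⟩)) = 1
    ∧ Bmat n r hr * (Matrix.of fun (i : Fin n) (j : Fin r) =>
        pderiv (Sum.inr (⟨r - 1 - (j : ℕ), by omega⟩ : Fin r)) (d ⟨n - 1 - (i : ℕ), by omega⟩))
        + Dmat n r (by omega) hrn d = 0
    ∧ Amat n r (by omega) hrn = Bmat n r hr * Dmat n r (by omega) hrn d := by
  have hn : 0 < n := by omega
  refine ⟨?_, ?_, ?_⟩
  · -- B·P = 1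
    refine Matrix.ext fun i j => ?_
    have hi := i.isLt
    have hj := j.isLt
    rw [Matrix.mul_apply, Matrix.one_apply]
    simp only [Matrix.of_apply]
    rw [conv n r hr i (fun t => pderiv (Sum.inl (⟨n - 1 - (j : ℕ), by omega⟩ : Fin n))
      (d ⟨n - 1 - t, by omega⟩))]
    have hk := key n r d hd ((i : ℕ) + 1) (by omega)
    have h2 := congrArg (pderiv (Sum.inl (⟨n - 1 - (j : ℕ), by omega⟩ : Fin n))) hk
    rw [map_sum] at h2
    simp only [Derivation.leibniz, smul_eq_mul, pderiv_bco_inl, mul_zero, add_zero] at h2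
    rw [Finset.sum_range_succ, Nat.sub_self, dco_zero, Derivation.map_one_eq_zero, mul_zero,
      add_zero, pderiv_aco_inl n r ((i : ℕ) + 1) (by omega) (by omega)] at h2
    have e3 : ∀ m ∈ Finset.range ((i : ℕ) + 1),
        bco n r m * pderiv (Sum.inl (⟨n - 1 - (j : ℕ), by omega⟩ : Fin n))
            (d ⟨n - 1 - ((i : ℕ) - m), by omega⟩)
          = bco n r m * pderiv (Sum.inl (⟨n - 1 - (j : ℕ), by omega⟩ : Fin n))
            (dco n r d ((i : ℕ) + 1 - m)) := by
      intro m hm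
      rw [Finset.mem_range] at hm
      have hd' : dco n r d ((i : ℕ) + 1 - m) = d ⟨n - 1 - ((i : ℕ) - m), by omega⟩ := by
        simp only [dco]
        rw [dif_neg (by omega), dif_pos (by omega)]
        exact congrArg d (Fin.mk_eq_mk.mpr (by omega))
      rw [hd']
    rw [Finset.sum_congr rfl e3, h2, Fin.val_mk]
    simp only [Fin.ext_iff]
    split_ifs <;> first | rfl | omega
  · -- B·Q + D = 0
    refine Matrix.ext fun i j => ?_
    have hi := i.isLt
    have hj := j.isLt
    rw [Matrix.add_apply, Matrix.zero_apply, Matrix.mul_apply]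
    simp only [Matrix.of_apply, Dmat, Matrix.submatrix_apply, id_eq]
    rw [Dhat_entry]
    simp only [Fin.coe_castLE]
    rw [conv n r hr i (fun t => pderiv (Sum.inr (⟨r - 1 - (j : ℕ), by omega⟩ : Fin r))
      (d ⟨n - 1 - t, by omega⟩))]
    have hk := key n r d hd ((i : ℕ) + 1) (by omega)
    have h2 := congrArg (pderiv (Sum.inr (⟨r - 1 - (j : ℕ), by omega⟩ : Fin r))) hk
    rw [map_sum] at h2
    simp only [Derivation.leibniz, smul_eq_mul, pderiv_bco_inr, pderiv_aco_inr,
      Fin.val_mk] at h2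
    rw [show r - (r - 1 - (j : ℕ)) = (j : ℕ) + 1 from by omega] at h2
    rw [Finset.sum_add_distrib, sum_pick_s2, Finset.sum_range_succ, Nat.sub_self, dco_zero,
      Derivation.map_one_eq_zero, mul_zero, add_zero] at h2
    have epick : (if (j : ℕ) + 1 < (i : ℕ) + 1 + 1 then dco n r d ((i : ℕ) + 1 - ((j : ℕ) + 1))
          else 0)
        = (if (j : ℕ) ≤ (i : ℕ) then dco n r d ((i : ℕ) - (j : ℕ)) else 0) := by
      split_ifs <;> first | rfl | (congr 1; omega) | omega
    rw [epick] at h2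
    have e3 : ∀ m ∈ Finset.range ((i : ℕ) + 1),
        bco n r m * pderiv (Sum.inr (⟨r - 1 - (j : ℕ), by omega⟩ : Fin r))
            (d ⟨n - 1 - ((i : ℕ) - m), by omega⟩)
          = bco n r m * pderiv (Sum.inr (⟨r - 1 - (j : ℕ), by omega⟩ : Fin r))
            (dco n r d ((i : ℕ) + 1 - m)) := by
      intro m hm
      rw [Finset.mem_range] at hm
      have hd' : dco n r d ((i : ℕ) + 1 - m) = d ⟨n - 1 - ((i : ℕ) - m), by omega⟩ := by
        simp only [dco]
        rw [dif_neg (by omega), dif_pos (by omega)]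
        exact congrArg d (Fin.mk_eq_mk.mpr (by omega))
      rw [hd']
    rw [Finset.sum_congr rfl e3]
    exact h2
  · -- A = B·D
    refine Matrix.ext fun i j => ?_
    have hi := i.isLt
    have hj := j.isLt
    rw [Matrix.mul_apply]
    simp only [Amat, Dmat, Matrix.submatrix_apply, id_eq]
    rw [Ahat_entry]
    simp only [Fin.coe_castLE]
    have hD : ∀ l : Fin n, Dhat n r hn d l (Fin.castLE hrn j)
        = (fun t => if (j : ℕ) ≤ t then dco n r d (t - (j : ℕ)) else 0) (l : ℕ) := by
      intro l
      rw [Dhat_entry]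
      simp [Fin.coe_castLE]
    simp only [hD]
    rw [conv n r hr i (fun t => if (j : ℕ) ≤ t then dco n r d (t - (j : ℕ)) else 0)]
    by_cases hji : (j : ℕ) ≤ (i : ℕ)
    · rw [if_pos hji, ← key n r d hd ((i : ℕ) - (j : ℕ)) (by omega)]
      have hsub2 : Finset.range ((i : ℕ) - (j : ℕ) + 1) ⊆ Finset.range ((i : ℕ) + 1) :=
        Finset.range_subset_range.mpr (by omega)
      have hzero2 : ∀ x ∈ Finset.range ((i : ℕ) + 1), x ∉ Finset.range ((i : ℕ) - (j : ℕ) + 1) →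
          bco n r x * (if (j : ℕ) ≤ (i : ℕ) - x then dco n r d ((i : ℕ) - x - (j : ℕ)) else 0)
            = 0 := by
        intro x hx hnx
        rw [Finset.mem_range] at hx
        rw [Finset.mem_range] at hnx
        rw [if_neg (by omega), mul_zero]
      rw [← Finset.sum_subset hsub2 hzero2]
      apply Finset.sum_congr rfl
      intro m hm
      rw [Finset.mem_range] at hm
      rw [if_pos (by omega), show (i : ℕ) - m - (j : ℕ) = (i : ℕ) - (j : ℕ) - m from by omega]
    · rw [if_neg hji]
      exact (Finset.sum_eq_zero fun m hm => by
        rw [Finset.mem_range] at hm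
        rw [if_neg (by omega), mul_zero]).symm

end TB
end
end

section
/- For every 1 ≤ s ≤ q_1, the n×r matrix with (i,j)-entry ∂^s d_{n-1-i}/(∂b_0^{s-1}∂b_{r-1-j}) equals −s times the product of the n×n matrix with (i,j)-entry ∂^s d_{n-1-i}/(∂b_0^{s-1}∂a_{n-1-j}) with the matrix D (indices 0-based). -/
open MvPolynomial Matrix

noncomputable section

namespace TB

set_option linter.dupNamespace false

/-- Coefficientwise partial derivative on power series, as a derivation. -/
def PdS (n r : ℕ) (v : Fin n ⊕ Fin r) :
    Derivation ℂ (PowerSeries (R n r)) (PowerSeries (R n r)) where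
  toFun f := PowerSeries.mk fun k => pderiv v (PowerSeries.coeff k f)
  map_add' f g := by
    refine PowerSeries.ext fun k => ?_
    simp [PowerSeries.coeff_mk]
  map_smul' c f := by
    refine PowerSeries.ext fun k => ?_
    simp [PowerSeries.coeff_mk, PowerSeries.coeff_smul]
  map_one_eq_zero' := by
    refine PowerSeries.ext fun k => ?_
    simp only [LinearMap.coe_mk, AddHom.coe_mk, PowerSeries.coeff_mk, PowerSeries.coeff_one]
    split <;> simp
  leibniz' f g := by
    rw [smul_eq_mul, smul_eq_mul, mul_comm g]
    refine PowerSeries.ext fun k => ?_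
    simp only [LinearMap.coe_mk, AddHom.coe_mk, PowerSeries.coeff_mk, smul_eq_mul,
      map_add, PowerSeries.coeff_mul, map_sum]
    rw [← Finset.sum_add_distrib]
    refine Finset.sum_congr rfl fun x hx => ?_
    rw [MvPolynomial.pderiv_mul]
    ring

lemma coeff_PdS (n r : ℕ) (v : Fin n ⊕ Fin r) (f : PowerSeries (R n r)) (k : ℕ) :
    PowerSeries.coeff k (PdS n r v f) = pderiv v (PowerSeries.coeff k f) := by
  show PowerSeries.coeff k (PowerSeries.mk fun k => pderiv v (PowerSeries.coeff k f)) = _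
  rw [PowerSeries.coeff_mk]

lemma coeff_PdS_iter (n r : ℕ) (v : Fin n ⊕ Fin r) (k : ℕ) :
    ∀ (m : ℕ) (f : PowerSeries (R n r)),
    PowerSeries.coeff k ((⇑(PdS n r v))^[m] f)
      = (fun q => pderiv v q)^[m] (PowerSeries.coeff k f) := by
  intro m
  induction m with
  | zero => intro f; simp
  | succ m ih =>
    intro f
    rw [Function.iterate_succ_apply', Function.iterate_succ_apply', coeff_PdS, ih]

lemma PdS_eq_zero (n r : ℕ) (v : Fin n ⊕ Fin r) (f : PowerSeries (R n r))
    (h : ∀ k, pderiv v (PowerSeries.coeff k f) = 0) : PdS n r v f = 0 := by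
  refine PowerSeries.ext fun k => ?_
  rw [coeff_PdS, h]
  simp

lemma PdS_X_pow (n r : ℕ) (v : Fin n ⊕ Fin r) (c : ℕ) :
    PdS n r v ((PowerSeries.X : PowerSeries (R n r)) ^ c) = 0 := by
  have hX : PdS n r v (PowerSeries.X : PowerSeries (R n r)) = 0 := by
    apply PdS_eq_zero
    intro k
    rw [PowerSeries.coeff_X]
    split <;> simp
  rw [Derivation.leibniz_pow, hX]
  simp

lemma PdS_Aser_inr (n r : ℕ) (w : Fin r) : PdS n r (Sum.inr w) (Aser n r) = 0 := by
  apply PdS_eq_zero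
  intro k
  simp only [Aser, ser, PowerSeries.coeff_mk]
  split
  · simp
  · split
    · split
      · exact pderiv_X_of_ne (by simp)
      · simp
    · simp

lemma PdS_Bser_inl (n r : ℕ) (w : Fin n) : PdS n r (Sum.inl w) (Bser n r) = 0 := by
  apply PdS_eq_zero
  intro k
  simp only [Bser, ser, PowerSeries.coeff_mk]
  split
  · simp
  · split
    · split
      · exact pderiv_X_of_ne (by simp)
      · simp
    · simp

lemma PdS_Bser_inr (n r : ℕ) (w : Fin r) :
    PdS n r (Sum.inr w) (Bser n r) = PowerSeries.X ^ (r - (w : ℕ)) := by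
  have hwr := w.isLt
  refine PowerSeries.ext fun k => ?_
  rw [coeff_PdS, PowerSeries.coeff_X_pow]
  simp only [Bser, ser, PowerSeries.coeff_mk]
  by_cases hk : 1 ≤ k ∧ k ≤ r
  · rw [if_neg (by omega), if_pos hk.2, dif_pos hk]
    by_cases hw : k = r - (w : ℕ)
    · rw [if_pos hw]
      have he : (Sum.inr (⟨r - k, by omega⟩ : Fin r) : Fin n ⊕ Fin r) = Sum.inr w := by
        congr 1
        apply Fin.ext
        simp only []
        omega
      rw [he, pderiv_X_self]
    · rw [if_neg hw]
      refine pderiv_X_of_ne fun hcon => ?_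
      apply hw
      have h2 : r - k = (w : ℕ) := congrArg Fin.val (Sum.inr.inj hcon)
      omega
  · have hw : ¬(k = r - (w : ℕ)) := by omega
    rw [if_neg hw]
    by_cases h0 : k = 0
    · rw [if_pos h0]
      simp
    · rw [if_neg h0, if_neg (by omega)]
      simp

lemma PdS_Aser_inl (n r : ℕ) (w : Fin n) :
    PdS n r (Sum.inl w) (Aser n r) = PowerSeries.X ^ (n - (w : ℕ)) := by
  have hwr := w.isLt
  refine PowerSeries.ext fun k => ?_
  rw [coeff_PdS, PowerSeries.coeff_X_pow]
  simp only [Aser, ser, PowerSeries.coeff_mk]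
  by_cases hk : 1 ≤ k ∧ k ≤ n
  · rw [if_neg (by omega), if_pos hk.2, dif_pos hk]
    by_cases hw : k = n - (w : ℕ)
    · rw [if_pos hw]
      have he : (Sum.inl (⟨n - k, by omega⟩ : Fin n) : Fin n ⊕ Fin r) = Sum.inl w := by
        congr 1
        apply Fin.ext
        simp only []
        omega
      rw [he, pderiv_X_self]
    · rw [if_neg hw]
      refine pderiv_X_of_ne fun hcon => ?_
      apply hw
      have h2 : n - k = (w : ℕ) := congrArg Fin.val (Sum.inl.inj hcon)
      omega
  · have hw : ¬(k = n - (w : ℕ)) := by omega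
    rw [if_neg hw]
    by_cases h0 : k = 0
    · rw [if_pos h0]
      simp
    · rw [if_neg h0, if_neg (by omega)]
      simp

/-- The multiplicative inverse of `Bser`. -/
def Binv (n r : ℕ) : PowerSeries (R n r) := (Bser n r).invOfUnit 1

lemma Bser_mul_Binv (n r : ℕ) : Bser n r * Binv n r = 1 := by
  refine PowerSeries.mul_invOfUnit _ _ ?_
  rw [← PowerSeries.coeff_zero_eq_constantCoeff_apply]
  simp [Bser, ser]

lemma PdS_Binv (n r : ℕ) (v : Fin n ⊕ Fin r) :
    PdS n r v (Binv n r) = -(Binv n r ^ 2 * PdS n r v (Bser n r)) := by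
  have h0 : Bser n r * PdS n r v (Binv n r) + Binv n r * PdS n r v (Bser n r) = 0 := by
    have h1 := (PdS n r v).leibniz (Bser n r) (Binv n r)
    rw [Bser_mul_Binv, Derivation.map_one_eq_zero] at h1
    rw [smul_eq_mul, smul_eq_mul] at h1
    exact h1.symm
  have hBB := Bser_mul_Binv n r
  linear_combination (Binv n r) * h0 - (PdS n r v (Binv n r)) * hBB

/-- `E = A·B⁻¹`. -/
def Eser (n r : ℕ) : PowerSeries (R n r) := Aser n r * Binv n r

lemma PdS_Eser_inr (n r : ℕ) (w : Fin r) :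
    PdS n r (Sum.inr w) (Eser n r)
      = -(PowerSeries.X ^ (r - (w : ℕ)) * Aser n r * Binv n r ^ 2) := by
  have h := (PdS n r (Sum.inr w)).leibniz (Aser n r) (Binv n r)
  rw [PdS_Binv, PdS_Bser_inr, PdS_Aser_inr] at h
  rw [Eser, h, smul_eq_mul, smul_eq_mul]
  ring

lemma PdS_Eser_inl (n r : ℕ) (w : Fin n) :
    PdS n r (Sum.inl w) (Eser n r)
      = PowerSeries.X ^ (n - (w : ℕ)) * Binv n r := by
  have h := (PdS n r (Sum.inl w)).leibniz (Aser n r) (Binv n r)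
  rw [PdS_Binv, PdS_Bser_inl, PdS_Aser_inl] at h
  rw [Eser, h, smul_eq_mul, smul_eq_mul]
  ring

lemma PdS_C (n r : ℕ) (v : Fin n ⊕ Fin r) (a : R n r) (h : pderiv v a = 0) :
    PdS n r v (PowerSeries.C (R := R n r) a) = 0 := by
  apply PdS_eq_zero
  intro k
  rw [PowerSeries.coeff_C]
  split
  · exact h
  · simp

lemma PdS_iter_const_mul (n r : ℕ) (v : Fin n ⊕ Fin r) (c : PowerSeries (R n r))
    (hc : PdS n r v c = 0) :
    ∀ m x, (⇑(PdS n r v))^[m] (c * x) = c * (⇑(PdS n r v))^[m] x := by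
  intro m
  induction m with
  | zero => intro x; simp
  | succ m ih =>
    intro x
    rw [Function.iterate_succ_apply', Function.iterate_succ_apply', ih, Derivation.leibniz, hc]
    simp [smul_eq_mul]

lemma iter_main (n r : ℕ) (hr : 0 < r) (F : PowerSeries (R n r))
    (hF : PdS n r (Sum.inr ⟨0, hr⟩) F = 0) :
    ∀ (m u c : ℕ),
      (⇑(PdS n r (Sum.inr ⟨0, hr⟩)))^[m] (PowerSeries.X ^ c * F * Binv n r ^ (u + 1))
        = PowerSeries.C (R := R n r)
              ((-1) ^ m * ((∏ i ∈ Finset.range m, (u + 1 + i) : ℕ) : R n r))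
            * (PowerSeries.X ^ (c + r * m) * F * Binv n r ^ (u + 1 + m)) := by
  intro m
  induction m with
  | zero =>
    intro u c
    simp
  | succ m ih =>
    intro u c
    have hδB : PdS n r (Sum.inr ⟨0, hr⟩) (Binv n r)
        = -(Binv n r ^ 2 * PowerSeries.X ^ r) := by
      rw [PdS_Binv, PdS_Bser_inr]
      norm_num
    have hstep : (PdS n r (Sum.inr ⟨0, hr⟩)) (PowerSeries.X ^ c * F * Binv n r ^ (u + 1))
        = PowerSeries.C (R := R n r) (-((u + 1 : ℕ) : R n r))
            * (PowerSeries.X ^ (c + r) * F * Binv n r ^ (u + 1 + 1)) := by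
      rw [Derivation.leibniz, Derivation.leibniz _ (PowerSeries.X ^ c) F, PdS_X_pow, hF,
        Derivation.leibniz_pow, hδB]
      simp only [smul_eq_mul, mul_zero, zero_mul, add_zero, zero_add, smul_zero,
        Nat.add_sub_cancel, nsmul_eq_mul, map_neg, map_natCast]
      push_cast
      ring
    rw [Function.iterate_succ_apply, hstep,
      PdS_iter_const_mul n r _ _ (PdS_C n r _ _ (by simp)), ih (u + 1) (c + r)]
    have e1 : c + r + r * m = c + r * (m + 1) := by ring
    have e2 : u + 1 + 1 + m = u + 1 + (m + 1) := by ring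
    rw [e1, e2, ← mul_assoc, ← _root_.map_mul (PowerSeries.C (R := R n r))]
    congr 2
    have e3 : (∏ i ∈ Finset.range (m + 1), (u + 1 + i) : ℕ)
        = (∏ i ∈ Finset.range m, (u + 1 + 1 + i) : ℕ) * (u + 1) := by
      rw [Finset.prod_range_succ']
      congr 1
      refine Finset.prod_congr rfl fun i _ => by omega
    rw [e3]
    push_cast
    ring

lemma coeff_Dser_eq (n r : ℕ) (d : Fin n → R n r) (hd : dSpec n r d) (k : ℕ) (hk : k ≤ n) :
    PowerSeries.coeff k (Dser n r d) = PowerSeries.coeff k (Eser n r) := by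
  have h2 : (Bser n r * Dser n r d) * Binv n r = Dser n r d := by
    calc (Bser n r * Dser n r d) * Binv n r = Dser n r d * (Bser n r * Binv n r) := by ring
    _ = Dser n r d := by rw [Bser_mul_Binv, mul_one]
  rw [← h2, Eser]
  rw [PowerSeries.coeff_mul, PowerSeries.coeff_mul]
  refine Finset.sum_congr rfl fun x hx => ?_
  have hx1 : x.1 + x.2 = k := Finset.HasAntidiagonal.mem_antidiagonal.mp hx
  rw [hd x.1 (by omega)]

lemma entry_d_s3 (n r : ℕ) (d : Fin n → R n r) (hd : dSpec n r d) (i : Fin n)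
    (h : n - 1 - (i : ℕ) < n) :
    d ⟨n - 1 - (i : ℕ), h⟩ = PowerSeries.coeff ((i : ℕ) + 1) (Eser n r) := by
  have hi := i.isLt
  rw [← coeff_Dser_eq n r d hd _ (by omega)]
  simp only [Dser, ser, PowerSeries.coeff_mk]
  rw [if_neg (by omega), if_pos (by omega), dif_pos ⟨by omega, by omega⟩]
  congr 1
  simp only [Fin.mk.injEq]
  omega

lemma Lpow_apply (n r : ℕ) (p : ℕ) (a b : Fin n) :
    (Lmat n r n ^ p) a b = if (a : ℕ) = (b : ℕ) + p then 1 else 0 := by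
  induction p generalizing b with
  | zero =>
    rw [pow_zero, Matrix.one_apply]
    simp [Fin.ext_iff]
  | succ p ih =>
    rw [pow_succ, Matrix.mul_apply]
    by_cases hb : (b : ℕ) + 1 < n
    · rw [Fintype.sum_eq_single (⟨(b : ℕ) + 1, hb⟩ : Fin n)]
      · rw [ih, Lmat, Matrix.of_apply]
        simp only [if_pos rfl, mul_one]
        have : (b : ℕ) + 1 + p = (b : ℕ) + (p + 1) := by omega
        rw [this]
        simp
      · intro c hc
        rw [Lmat, Matrix.of_apply, if_neg, mul_zero]
        intro hcon
        exact hc (Fin.ext hcon)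
    · rw [if_neg (by have := a.isLt; omega)]
      refine Finset.sum_eq_zero fun c _ => ?_
      rw [Lmat, Matrix.of_apply, if_neg (by have := c.isLt; omega), mul_zero]

lemma Dmat_apply (n r : ℕ) (hn : 0 < n) (hrn : r ≤ n) (d : Fin n → R n r)
    (k : Fin n) (j : Fin r) :
    Dmat n r hn hrn d k j
      = if (j : ℕ) ≤ (k : ℕ)
          then PowerSeries.coeff ((k : ℕ) - (j : ℕ)) (Dser n r d) else 0 := by
  have hk := k.isLt
  have hj := j.isLt
  rw [Dmat, Matrix.submatrix_apply, id_eq, Dhat, Matrix.add_apply, Matrix.sum_apply]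
  have hcast : ((Fin.castLE hrn j : Fin n) : ℕ) = (j : ℕ) := rfl
  rcases Nat.lt_trichotomy (j : ℕ) (k : ℕ) with hlt | heq | hgt
  · rw [Matrix.one_apply_ne (by intro hcon; have := congrArg Fin.val hcon; omega)]
    rw [Finset.sum_eq_single ((k : ℕ) - (j : ℕ) - 1)]
    · rw [Matrix.smul_apply, Lpow_apply, if_pos (by omega), smul_eq_mul, mul_one, zero_add]
      rw [if_pos (by omega)]
      simp only [Dser, ser, PowerSeries.coeff_mk]
      rw [if_neg (by omega), if_pos (by omega), dif_pos ⟨by omega, by omega⟩]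
      congr 1
      simp only [Fin.mk.injEq]
      omega
    · intro m _ hm
      rw [Matrix.smul_apply, Lpow_apply, if_neg (by omega), smul_eq_mul, mul_zero]
    · intro hcon
      exact absurd (Finset.mem_range.mpr (by omega)) hcon
  · rw [Matrix.one_apply, if_pos (Fin.ext (by simp only [Fin.coe_castLE]; omega) : k = Fin.castLE hrn j)]
    rw [Finset.sum_eq_zero, add_zero, if_pos (by omega)]
    · have e : (k : ℕ) - (j : ℕ) = 0 := by omega
      rw [e]
      simp [Dser, ser]
    · intro m _
      rw [Matrix.smul_apply, Lpow_apply, if_neg (by omega), smul_eq_mul, mul_zero]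
  · rw [Matrix.one_apply_ne (by intro hcon; have := congrArg Fin.val hcon; omega)]
    rw [if_neg (by omega), Finset.sum_eq_zero, add_zero]
    intro m _
    rw [Matrix.smul_apply, Lpow_apply, if_neg (by omega), smul_eq_mul, mul_zero]

lemma conv_sum {A : Type*} [CommRing A] (f g : PowerSeries A) (N i j : ℕ) (hi : i < N) :
    ∑ k ∈ Finset.range N,
      (if k ≤ i then PowerSeries.coeff (i - k) f else 0) *
        (if j ≤ k then PowerSeries.coeff (k - j) g else 0)
      = if j ≤ i then PowerSeries.coeff (i - j) (f * g) else 0 := by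
  by_cases hj : j ≤ i
  · rw [if_pos hj]
    have hsub : Finset.Ico j (i + 1) ⊆ Finset.range N := by
      intro x hx; rw [Finset.mem_Ico] at hx; rw [Finset.mem_range]; omega
    rw [← Finset.sum_subset hsub (fun x hx hnx => by
      rw [Finset.mem_range] at hx
      rw [Finset.mem_Ico] at hnx
      by_cases h1 : x ≤ i
      · rw [if_neg (show ¬ j ≤ x by omega), mul_zero]
      · rw [if_neg h1, zero_mul])]
    rw [Finset.sum_Ico_eq_sum_range]
    rw [mul_comm f g, PowerSeries.coeff_mul, Finset.Nat.sum_antidiagonal_eq_sum_range_succ_mk]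
    have he : i + 1 - j = (i - j) + 1 := by omega
    rw [he]
    refine Finset.sum_congr rfl fun q hq => ?_
    rw [Finset.mem_range] at hq
    rw [if_pos (by omega), if_pos (by omega)]
    have e1 : i - (j + q) = i - j - q := by omega
    have e2 : j + q - j = q := by omega
    rw [e1, e2, mul_comm]
  · rw [if_neg hj]
    refine Finset.sum_eq_zero fun x hx => ?_
    by_cases h1 : x ≤ i
    · rw [if_neg (show ¬ j ≤ x by omega), mul_zero]
    · rw [if_neg h1, zero_mul]

lemma prod_one_add (m : ℕ) : (∏ i ∈ Finset.range m, (1 + i)) = m.factorial := by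
  induction m with
  | zero => simp
  | succ m ih => rw [Finset.prod_range_succ, ih, Nat.factorial_succ]; ring

lemma prod_two_add (m : ℕ) : (∏ i ∈ Finset.range m, (2 + i)) = (m + 1).factorial := by
  induction m with
  | zero => simp
  | succ m ih =>
    rw [Finset.prod_range_succ, ih, show m + 1 + 1 = (m + 1) + 1 from rfl,
      Nat.factorial_succ (m + 1)]
    ring

lemma seriesB (n r : ℕ) (hr : 0 < r) (m : ℕ) (j : ℕ) (hj : j < r) (pf : r - 1 - j < r) :
    (⇑(PdS n r (Sum.inr ⟨0, hr⟩)))^[m] (PdS n r (Sum.inr ⟨r - 1 - j, pf⟩) (Eser n r))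
      = PowerSeries.C (R := R n r) ((-1) ^ (m + 1) * ((m + 1).factorial : R n r))
          * (PowerSeries.X ^ (j + 1 + r * m) * Aser n r * Binv n r ^ (m + 2)) := by
  rw [PdS_Eser_inr]
  have er : r - (((⟨r - 1 - j, pf⟩ : Fin r) : Fin r) : ℕ) = j + 1 := by
    simp only [Fin.val_mk]
    omega
  rw [er]
  have hneg : -(PowerSeries.X ^ (j + 1) * Aser n r * Binv n r ^ 2)
      = PowerSeries.C (R := R n r) (-1)
          * (PowerSeries.X ^ (j + 1) * Aser n r * Binv n r ^ (1 + 1)) := by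
    rw [map_neg, _root_.map_one (PowerSeries.C (R := R n r))]
    ring
  rw [hneg, PdS_iter_const_mul n r _ _ (PdS_C n r _ _ (by simp)),
    iter_main n r hr (Aser n r) (PdS_Aser_inr n r _) m 1 (j + 1)]
  rw [← mul_assoc, ← _root_.map_mul (PowerSeries.C (R := R n r))]
  have e2 : 1 + 1 + m = m + 2 := by omega
  rw [e2]
  have e3 : (∏ i ∈ Finset.range m, (1 + 1 + i)) = (m + 1).factorial := by
    rw [← prod_two_add m]
  rw [e3]
  push_cast
  ring

lemma seriesA (n r : ℕ) (hr : 0 < r) (hn : 0 < n) (m : ℕ) (k : ℕ) (hk : k < n)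
    (pf : n - 1 - k < n) :
    (⇑(PdS n r (Sum.inr ⟨0, hr⟩)))^[m] (PdS n r (Sum.inl ⟨n - 1 - k, pf⟩) (Eser n r))
      = PowerSeries.C (R := R n r) ((-1) ^ m * (m.factorial : R n r))
          * (PowerSeries.X ^ (k + 1 + r * m) * Binv n r ^ (m + 1)) := by
  rw [PdS_Eser_inl]
  have er : n - (((⟨n - 1 - k, pf⟩ : Fin n) : Fin n) : ℕ) = k + 1 := by
    simp only [Fin.val_mk]
    omega
  rw [er]
  have h1 : PowerSeries.X ^ (k + 1) * Binv n r
      = PowerSeries.X ^ (k + 1) * (1 : PowerSeries (R n r)) * Binv n r ^ (0 + 1) := by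
    ring
  rw [h1, iter_main n r hr 1 (Derivation.map_one_eq_zero _) m 0 (k + 1)]
  have e2 : 0 + 1 + m = m + 1 := by omega
  rw [e2, prod_one_add m]
  ring

/-- Lemma 3.2: for `1 ≤ s ≤ q_1`,
`(∂^s d_{n-1-i}/(∂b_0^{s-1}∂b_{r-1-j})) = -s · (∂^s d_{n-1-i}/(∂b_0^{s-1}∂a_{n-1-j})) · D`. -/
theorem stmt3 (n r q1 r1 : ℕ) (hq1 : 1 ≤ q1) (h1 : 0 < r1) (h2 : r1 < r)
    (hn : n = q1 * r + r1)
    (d : Fin n → R n r) (hd : dSpec n r d) :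
    ∀ s, 1 ≤ s → s ≤ q1 →
      (Matrix.of fun (i : Fin n) (j : Fin r) =>
          (fun q => pderiv (Sum.inr (⟨0, by omega⟩ : Fin r)) q)^[s - 1]
            (pderiv (Sum.inr (⟨r - 1 - (j : ℕ), by omega⟩ : Fin r))
              (d ⟨n - 1 - (i : ℕ), by omega⟩)))
        = (-(s : R n r)) •
          ((Matrix.of fun i j : Fin n =>
              (fun q => pderiv (Sum.inr (⟨0, by omega⟩ : Fin r)) q)^[s - 1]
                (pderiv (Sum.inl (⟨n - 1 - (j : ℕ), by omega⟩ : Fin n))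
                  (d ⟨n - 1 - (i : ℕ), by omega⟩)))
            * Dmat n r (by omega) (rle q1 r r1 n (by omega) hn) d) := by
  intro s hs1 _hs2
  obtain ⟨m, rfl⟩ : ∃ m, s = m + 1 := ⟨s - 1, by omega⟩
  have hr : 0 < r := by omega
  have hrn : r ≤ n := rle q1 r r1 n hq1 hn
  have hn0 : 0 < n := by omega
  ext i j : 2
  have hi := i.isLt
  have hj := j.isLt
  rw [Matrix.smul_apply, Matrix.mul_apply, smul_eq_mul]
  simp only [Matrix.of_apply, Nat.add_sub_cancel]
  -- compute each summand on the right-hand side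
  have hterm : ∀ k : Fin n,
      (fun q => pderiv (Sum.inr (⟨0, by omega⟩ : Fin r)) q)^[m]
          (pderiv (Sum.inl (⟨n - 1 - (k : ℕ), by omega⟩ : Fin n))
            (d ⟨n - 1 - (i : ℕ), by omega⟩))
        * Dmat n r hn0 hrn d k j
      = ((-1) ^ m * (m.factorial : R n r)) *
          ((if (k : ℕ) ≤ (i : ℕ)
              then PowerSeries.coeff ((i : ℕ) - (k : ℕ))
                (PowerSeries.X ^ (r * m) * Binv n r ^ (m + 1)) else 0) *
           (if (j : ℕ) ≤ (k : ℕ)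
              then PowerSeries.coeff ((k : ℕ) - (j : ℕ)) (Eser n r) else 0)) := by
    intro k
    have hk := k.isLt
    rw [entry_d_s3 n r d hd i (by omega), ← coeff_PdS, ← coeff_PdS_iter,
      seriesA n r hr hn0 m (k : ℕ) hk (by omega), PowerSeries.coeff_C_mul]
    have hsplit2 : PowerSeries.X ^ ((k : ℕ) + 1 + r * m) * Binv n r ^ (m + 1)
        = PowerSeries.X ^ ((k : ℕ) + 1)
            * (PowerSeries.X ^ (r * m) * Binv n r ^ (m + 1)) := by
      rw [pow_add]; ring
    rw [hsplit2, PowerSeries.coeff_X_pow_mul']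
    have hD : Dmat n r hn0 hrn d k j
        = (if (j : ℕ) ≤ (k : ℕ)
            then PowerSeries.coeff ((k : ℕ) - (j : ℕ)) (Eser n r) else 0) := by
      rw [Dmat_apply]
      by_cases hc : (j : ℕ) ≤ (k : ℕ)
      · rw [if_pos hc, if_pos hc, coeff_Dser_eq n r d hd _ (by omega)]
      · rw [if_neg hc, if_neg hc]
    rw [hD]
    have e1 : ((i : ℕ) + 1) - ((k : ℕ) + 1) = (i : ℕ) - (k : ℕ) := by omega
    simp only [Nat.add_le_add_iff_right, e1]
    ring
  rw [Finset.sum_congr rfl fun k _ => hterm k, ← Finset.mul_sum,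
    Fin.sum_univ_eq_sum_range (fun k =>
      (if k ≤ (i : ℕ)
          then PowerSeries.coeff ((i : ℕ) - k)
            (PowerSeries.X ^ (r * m) * Binv n r ^ (m + 1)) else 0) *
      (if (j : ℕ) ≤ k
          then PowerSeries.coeff (k - (j : ℕ)) (Eser n r) else 0)) n,
    conv_sum _ _ n (i : ℕ) (j : ℕ) hi]
  -- compute the left-hand side
  rw [entry_d_s3 n r d hd i (by omega), ← coeff_PdS, ← coeff_PdS_iter,
    seriesB n r hr m (j : ℕ) hj (by omega), PowerSeries.coeff_C_mul]
  have hsplit1 : PowerSeries.X ^ ((j : ℕ) + 1 + r * m) * Aser n r * Binv n r ^ (m + 2)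
      = PowerSeries.X ^ ((j : ℕ) + 1)
          * (PowerSeries.X ^ (r * m) * Aser n r * Binv n r ^ (m + 2)) := by
    rw [pow_add]; ring
  rw [hsplit1, PowerSeries.coeff_X_pow_mul']
  have hser : (PowerSeries.X ^ (r * m) * Binv n r ^ (m + 1)) * Eser n r
      = PowerSeries.X ^ (r * m) * Aser n r * Binv n r ^ (m + 2) := by
    rw [Eser, pow_succ]; ring
  rw [hser]
  have e1 : ((i : ℕ) + 1) - ((j : ℕ) + 1) = (i : ℕ) - (j : ℕ) := by omega
  simp only [Nat.add_le_add_iff_right, e1]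
  by_cases hc : (j : ℕ) ≤ (i : ℕ)
  · simp only [if_pos hc]
    congr 1
    push_cast [Nat.factorial_succ]
    ring
  · simp only [if_neg hc]
    congr 1
    push_cast [Nat.factorial_succ]
    ring

end TB
end
end
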